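/- Let r_1, …, r_m be a finite sequence of integers such that r_k ≥ 2 for all k and ∑_{k=1}^m (r_k − 1/r_k) < 24. Set r := lcm(r_1, …, r_m). Then r · (24 − ∑_{k=1}^m (r_k − 1/r_k)) ≤ 2489, and equality holds if and only if m = 4 and the multiset {r_1, r_2, r_3, r_4} equals {3, 4, 5, 7}. -/

import Mathlib

/-- `B S` for a finite multiset `S` of positive integers:
`lcm(S) * (24 - ∑_{r ∈ S} (r - 1/r))`, computed in `ℚ`. -/
def B (S : Multiset ℕ) : ℚ :=
  (S.lcm : ℚ) * (24 - (S.map (fun r => (r : ℚ) - 1 / r)).sum)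


def ZL (L : ℕ) (l : List ℕ) : ℤ :=
  24 * L - (l.map (fun v : ℕ => (v : ℤ) * L - (↑(L / v) : ℤ))).sum

def OK (l : List ℕ) : Prop :=
  ZL (l.foldr Nat.lcm 1) l ≤ 2489 ∧ (ZL (l.foldr Nat.lcm 1) l = 2489 ↔ l = [3, 4, 5, 7])

instance : DecidablePred OK := fun l => by unfold OK; infer_instance

set_option maxHeartbeats 4000000 in
theorem key5 : ∀ a ∈ List.range' 2 23, ∀ b ∈ List.range' (a+1) (24-a),
    ∀ c ∈ List.range' (b+1) (24-b), ∀ d ∈ List.range' (c+1) (24-c),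
    ∀ e ∈ List.range' (d+1) (min 24 (26 - (a+b+c+d)) + 1 - (d+1)),
    OK [a, b, c, d, e] := by decide

set_option maxHeartbeats 4000000 in
theorem key4 : ∀ a ∈ List.range' 2 23, ∀ b ∈ List.range' (a+1) (24-a),
    ∀ c ∈ List.range' (b+1) (24-b),
    ∀ d ∈ List.range' (c+1) (min 24 ((51 - 2*(a+b+c))/2) + 1 - (c+1)),
    OK [a, b, c, d] := by decide

set_option maxHeartbeats 4000000 in
theorem key3 : ∀ a ∈ List.range' 2 23, ∀ b ∈ List.range' (a+1) (24-a),
    ∀ c ∈ List.range' (b+1) (24-b), OK [a, b, c] := by decide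

set_option maxHeartbeats 1000000 in
theorem key2 : ∀ a ∈ List.range' 2 23, ∀ b ∈ List.range' (a+1) (24-a), OK [a, b] := by decide

theorem key1 : ∀ a ∈ List.range' 2 23, OK [a] := by decide

theorem key0 : OK [] := by decide

def fQ (v : ℕ) : ℚ := (v : ℚ) - 1 / v

theorem B_eq (S : Multiset ℕ) :
    B S = (S.lcm : ℚ) * (24 - (S.map fQ).sum) := by
  rw [B]
  congr 2
  show (Multiset.map _ (Multiset.bind S fun a => {((a : ℚ))})).sum = _
  rw [Multiset.bind_singleton, Multiset.map_map]
  rfl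

theorem f_bounds (v : ℕ) (h : 2 ≤ v) :
    (3:ℚ)/2 ≤ fQ v ∧ (v : ℚ) - 1/2 ≤ fQ v := by
  have hv2 : (2:ℚ) ≤ (v : ℚ) := by exact_mod_cast h
  have hv0 : (0:ℚ) < (v : ℚ) := by linarith
  have h12 : 1 / (v:ℚ) ≤ 1/2 := by
    rw [div_le_div_iff₀ hv0 (by norm_num)]; linarith
  unfold fQ
  constructor <;> linarith

-- placeholders for already-verified pieces

theorem lcm_coe (l : List ℕ) : (Multiset.ofList l).lcm = l.foldr Nat.lcm 1 := by
  have : (lcm : ℕ → ℕ → ℕ) = Nat.lcm := funext fun a => funext fun b => lcm_eq_nat_lcm a b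
  simp [Multiset.lcm, Multiset.coe_fold_r, this]

theorem sum_cast (L : ℕ) (l : List ℕ) (h : ∀ v ∈ l, 0 < v ∧ v ∣ L) :
    ((l.map (fun v : ℕ => (v : ℚ) - 1 / v)).sum) * L
      = (((l.map (fun v : ℕ => (v : ℤ) * L - (↑(L / v) : ℤ))).sum : ℤ) : ℚ) := by
  induction l with
  | nil => simp
  | cons a t ih =>
    obtain ⟨ha, hd⟩ := h a (by simp)
    have ht := fun v hv => h v (List.mem_cons_of_mem _ hv)
    have ha' : ((a : ℚ)) ≠ 0 := by exact_mod_cast ha.ne'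
    have hcast : ((↑(L / a) : ℤ) : ℚ) = (L : ℚ) / a := by
      rw [Int.cast_natCast, Nat.cast_div hd ha']
    simp only [List.map_cons, List.sum_cons, add_mul, Int.cast_add, ← ih ht]
    congr 1
    rw [Int.cast_sub, Int.cast_mul, hcast]
    push_cast
    field_simp

theorem B_coe (l : List ℕ) (h : ∀ v ∈ l, 0 < v) :
    B (Multiset.ofList l) = ((ZL (l.foldr Nat.lcm 1) l : ℤ) : ℚ) := by
  have hdvd : ∀ v ∈ l, 0 < v ∧ v ∣ l.foldr Nat.lcm 1 := fun v hv =>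
    ⟨h v hv, by rw [← lcm_coe]; exact Multiset.dvd_lcm (by simpa using hv)⟩
  rw [B_eq, ZL, lcm_coe, Multiset.map_coe, Multiset.sum_coe]
  rw [show fQ = (fun v : ℕ => (v : ℚ) - 1 / v) from rfl]
  rw [Int.cast_sub, Int.cast_mul, ← sum_cast _ _ hdvd]
  push_cast
  ring

theorem sum_distinct : ∀ (n : ℕ) (s : Finset ℕ), s.card = n → (∀ v ∈ s, 2 ≤ v) →
    n * (n + 3) ≤ 2 * s.sum id := by
  intro n
  induction n with
  | zero => intro s _ _; simp
  | succ n ih =>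
    intro s hc h2
    have hne : s.Nonempty := Finset.card_pos.mp (by omega)
    set M := s.max' hne with hM
    have hMs : M ∈ s := s.max'_mem hne
    have hsub : s ⊆ Finset.Icc 2 M := fun v hv =>
      Finset.mem_Icc.mpr ⟨h2 v hv, s.le_max' v hv⟩
    have hcard : s.card ≤ M - 1 := by
      simpa [Nat.card_Icc] using Finset.card_le_card hsub
    have hM2 : n + 2 ≤ M := by omega
    have hih := ih (s.erase M) (by rw [Finset.card_erase_of_mem hMs, hc]; rfl)
      (fun v hv => h2 v (Finset.mem_of_mem_erase hv))
    have hsum : s.sum id = M + (s.erase M).sum id := by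
      simpa using (Finset.add_sum_erase s id hMs).symm
    have hr : (n + 1) * (n + 1 + 3) = n * (n + 3) + 2 * (n + 2) := by ring
    omega

theorem keyAll (l : List ℕ) (hs : l.Pairwise (· < ·)) (hlo : ∀ v ∈ l, 2 ≤ v)
    (hhi : ∀ v ∈ l, v ≤ 24) (hlen : l.length ≤ 5)
    (hsum2 : 2 * l.sum ≤ 47 + l.length) : OK l := by
  match l, hlen with
  | [], _ => exact key0
  | [a], _ =>
    have h1 := hlo a (by simp); have h2 := hhi a (by simp)
    exact key1 a (by simp [List.mem_range'_1]; omega)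
  | [a, b], _ =>
    simp only [List.pairwise_cons, List.mem_cons, List.mem_singleton] at hs
    have h1 := hlo a (by simp); have h2 := hhi a (by simp)
    have h3 := hlo b (by simp); have h4 := hhi b (by simp)
    have hab : a < b := by aesop
    exact key2 a (by simp [List.mem_range'_1]; omega) b (by simp [List.mem_range'_1]; omega)
  | [a, b, c], _ =>
    simp only [List.pairwise_cons, List.mem_cons, List.mem_singleton] at hs
    have h1 := hlo a (by simp); have h2 := hhi a (by simp)
    have h3 := hlo b (by simp); have h4 := hhi b (by simp)
    have h5 := hlo c (by simp); have h6 := hhi c (by simp)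
    have hab : a < b ∧ b < c := by aesop
    exact key3 a (by simp [List.mem_range'_1]; omega) b (by simp [List.mem_range'_1]; omega)
      c (by simp [List.mem_range'_1]; omega)
  | [a, b, c, d], _ =>
    simp only [List.pairwise_cons, List.mem_cons, List.mem_singleton] at hs
    have h1 := hlo a (by simp); have h2 := hhi a (by simp)
    have h3 := hlo b (by simp); have h4 := hhi b (by simp)
    have h5 := hlo c (by simp); have h6 := hhi c (by simp)
    have h7 := hlo d (by simp); have h8 := hhi d (by simp)
    have hab : (a < b ∧ b < c) ∧ c < d := by aesop
    simp only [List.sum_cons, List.sum_nil, List.length_cons, List.length_nil] at hsum2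
    exact key4 a (by simp [List.mem_range'_1]; omega) b (by simp [List.mem_range'_1]; omega)
      c (by simp [List.mem_range'_1]; omega) d (by simp [List.mem_range'_1]; omega)
  | [a, b, c, d, e], _ =>
    simp only [List.pairwise_cons, List.mem_cons, List.mem_singleton] at hs
    have h1 := hlo a (by simp); have h2 := hhi a (by simp)
    have h3 := hlo b (by simp); have h4 := hhi b (by simp)
    have h5 := hlo c (by simp); have h6 := hhi c (by simp)
    have h7 := hlo d (by simp); have h8 := hhi d (by simp)
    have h9 := hlo e (by simp); have h10 := hhi e (by simp)
    have hab : ((a < b ∧ b < c) ∧ c < d) ∧ d < e := by aesop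
    simp only [List.sum_cons, List.sum_nil, List.length_cons, List.length_nil] at hsum2
    exact key5 a (by simp [List.mem_range'_1]; omega) b (by simp [List.mem_range'_1]; omega)
      c (by simp [List.mem_range'_1]; omega) d (by simp [List.mem_range'_1]; omega)
      e (by simp [List.mem_range'_1]; omega)

theorem B_3457 : B ({3,4,5,7} : Multiset ℕ) = 2489 := by
  have h : ({3,4,5,7} : Multiset ℕ) = Multiset.ofList [3,4,5,7] := rfl
  rw [h, B_coe _ (by decide)]
  norm_num [ZL]

theorem stmt_0 (m : ℕ) (r : Fin m → ℕ) (h2 : ∀ k, 2 ≤ r k)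
    (hsum : ∑ k, ((r k : ℚ) - 1 / (r k)) < 24) :
    B (Multiset.map r Finset.univ.val) ≤ 2489 ∧
      (B (Multiset.map r Finset.univ.val) = 2489 ↔
        m = 4 ∧ Multiset.map r Finset.univ.val = ({3, 4, 5, 7} : Multiset ℕ)) := by
  classical
  set S : Multiset ℕ := Multiset.map r Finset.univ.val with hSdef
  have hS2 : ∀ v ∈ S, 2 ≤ v := by
    intro v hv; obtain ⟨k, _, rfl⟩ := Multiset.mem_map.mp hv; exact h2 k
  have hSsum : (S.map fQ).sum < 24 := by
    have he : (S.map fQ).sum = ∑ k, ((r k : ℚ) - 1 / (r k)) := by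
      rw [hSdef, Multiset.map_map, Finset.sum_eq_multiset_sum]
      rfl
    rw [he]; exact hsum
  obtain ⟨u, hu⟩ := Multiset.le_iff_exists_add.mp (Multiset.dedup_le S)
  set T := S.dedup with hTdef
  have hu2 : ∀ v ∈ u, 2 ≤ v := fun v hv => hS2 v (by rw [hu]; exact Multiset.mem_add.mpr (Or.inr hv))
  have hu_nonneg : (0:ℚ) ≤ (u.map fQ).sum := by
    apply Multiset.sum_nonneg
    intro x hx; obtain ⟨v, hv, rfl⟩ := Multiset.mem_map.mp hx
    have := (f_bounds v (hu2 v hv)).1; linarith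
  have hsum_split : (S.map fQ).sum = (T.map fQ).sum + (u.map fQ).sum := by
    conv_lhs => rw [hu]
    rw [Multiset.map_add, Multiset.sum_add]
  have hTle : (T.map fQ).sum ≤ (S.map fQ).sum := by linarith
  have hT2 : ∀ v ∈ T, 2 ≤ v := fun v hv => hS2 v (Multiset.mem_dedup.mp hv)
  have hTsum : (T.map fQ).sum < 24 := lt_of_le_of_lt hTle hSsum
  have hlcm : T.lcm = S.lcm := Multiset.lcm_dedup S
  have hBle : B S ≤ B T := by
    rw [B_eq, B_eq, hlcm]
    apply mul_le_mul_of_nonneg_left _ (by positivity)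
    linarith
  have hmapT_nonneg : ∀ x ∈ T.map fQ, (0:ℚ) ≤ x := by
    intro x hx; obtain ⟨v, hv, rfl⟩ := Multiset.mem_map.mp hx
    have := (f_bounds v (hT2 v hv)).1; linarith
  have hT24 : ∀ v ∈ T, v ≤ 24 := by
    intro v hv
    have hfv : fQ v ≤ (T.map fQ).sum :=
      Multiset.single_le_sum hmapT_nonneg _ (Multiset.mem_map_of_mem fQ hv)
    have hb := (f_bounds v (hT2 v hv)).2
    by_contra hgt
    push_neg at hgt
    have : (25:ℚ) ≤ (v:ℚ) := by exact_mod_cast hgt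
    linarith
  have hnodupT : T.Nodup := Multiset.nodup_dedup S
  have hTsum_lower : ((T.sum : ℚ)) - (Multiset.card T)/2 ≤ (T.map fQ).sum := by
    have h1 : (T.map (fun v : ℕ => (v:ℚ) - 1/2)).sum ≤ (T.map fQ).sum :=
      Multiset.sum_map_le_sum_map _ _ (fun v hv => (f_bounds v (hT2 v hv)).2)
    have h2' : (T.map (fun v : ℕ => (v:ℚ) - 1/2)).sum
        = (T.sum:ℚ) - (Multiset.card T)/2 := by
      rw [Multiset.sum_map_sub]
      rw [Nat.cast_multiset_sum]
      simp [Multiset.map_const', Multiset.sum_replicate]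
      ring
    linarith
  have hNsum : 2 * T.sum ≤ 47 + Multiset.card T := by
    have hq : (2:ℚ) * (T.sum:ℚ) < 48 + (Multiset.card T : ℚ) := by linarith
    have hn : (2 * T.sum : ℕ) < 48 + Multiset.card T := by exact_mod_cast hq
    omega
  have hcard5 : Multiset.card T ≤ 5 := by
    set F : Finset ℕ := ⟨T, hnodupT⟩ with hF
    have hsd := sum_distinct F.card F rfl (fun v hv => hT2 v hv)
    have hFsum : F.sum id = T.sum := by
      rw [Finset.sum_eq_multiset_sum]
      simp [hF]
    have hFcard : F.card = Multiset.card T := rfl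
    rw [hFsum, hFcard] at hsd
    set k := Multiset.card T
    have h9 : k * 9 ≤ k * (k + 3) ∨ k ≤ 5 := by
      by_cases hk : k ≤ 5
      · exact Or.inr hk
      · exact Or.inl (Nat.mul_le_mul_left k (by omega))
    rcases h9 with h9 | h9
    · omega
    · exact h9
  set l := Multiset.sort T (· ≤ ·) with hldef
  have hlcoe : Multiset.ofList l = T := Multiset.sort_eq T _
  have hlnodup : l.Nodup := by
    rw [← Multiset.coe_nodup]
    rw [hlcoe]  -- coe vs ofList?
    exact hnodupT
  have hlsorted : l.Pairwise (· < ·) :=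
    ((Multiset.pairwise_sort T _).sortedLE.sortedLT_of_nodup hlnodup).pairwise
  have hmem : ∀ v, v ∈ l ↔ v ∈ T := fun v => by rw [← hlcoe]; simp
  have hllen : l.length = Multiset.card T := by rw [← hlcoe]; simp
  have hlsum : l.sum = T.sum := by rw [← hlcoe]; simp
  have hOK := keyAll l hlsorted (fun v hv => hT2 v ((hmem v).mp hv))
    (fun v hv => hT24 v ((hmem v).mp hv)) (by omega) (by omega)
  have hBT : B T = ((ZL (l.foldr Nat.lcm 1) l : ℤ) : ℚ) := by
    rw [← hlcoe]
    exact B_coe l (fun v hv => by have := hT2 v ((hmem v).mp hv); omega)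
  have hBT_le : B T ≤ 2489 := by
    rw [hBT]
    exact_mod_cast hOK.1
  refine ⟨le_trans hBle hBT_le, ?_, ?_⟩
  · intro hBS
    have hBT2489 : B T = 2489 := le_antisymm hBT_le (hBS ▸ hBle)
    have hZ : ZL (l.foldr Nat.lcm 1) l = 2489 := by
      have := hBT.symm.trans hBT2489
      exact_mod_cast this
    have hl347 : l = [3,4,5,7] := hOK.2.mp hZ
    have hT347 : T = ({3,4,5,7} : Multiset ℕ) := by rw [← hlcoe, hl347]; rfl
    have h420 : Multiset.lcm ({3,4,5,7} : Multiset ℕ) = 420 := by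
      rw [show ({3,4,5,7} : Multiset ℕ) = Multiset.ofList [3,4,5,7] from rfl, lcm_coe]
      rfl
    have hlcmS : (S.lcm : ℚ) = 420 := by
      rw [← hlcm, hT347, h420]; norm_num
    have hBS' : B S = B T := by rw [hBS, hBT2489]
    have hsum_eq : (S.map fQ).sum = (T.map fQ).sum := by
      rw [B_eq, B_eq, hlcm] at hBS'
      have h420 : (S.lcm : ℚ) ≠ 0 := by rw [hlcmS]; norm_num
      have := mul_left_cancel₀ h420 hBS'
      linarith
    have husum : (u.map fQ).sum = 0 := by linarith
    have hu0 : u = 0 := by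
      by_contra hne
      obtain ⟨v, hv⟩ := Multiset.exists_mem_of_ne_zero hne
      have humap_nonneg : ∀ x ∈ u.map fQ, (0:ℚ) ≤ x := by
        intro x hx; obtain ⟨w, hw, rfl⟩ := Multiset.mem_map.mp hx
        have := (f_bounds w (hu2 w hw)).1; linarith
      have hfv : fQ v ≤ (u.map fQ).sum :=
        Multiset.single_le_sum humap_nonneg _ (Multiset.mem_map_of_mem fQ hv)
      have := (f_bounds v (hu2 v hv)).1
      rw [husum] at hfv
      linarith
    have hST : S = T := by rw [hu, hu0, add_zero]
    have hS347 : S = ({3,4,5,7} : Multiset ℕ) := hST.trans hT347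
    have hm : m = 4 := by
      have hcS : Multiset.card S = m := by
        rw [hSdef, Multiset.card_map]
        exact Finset.card_univ.trans (Fintype.card_fin m)
      rw [hS347] at hcS
      simpa using hcS.symm
    exact ⟨hm, hS347⟩
  · rintro ⟨hm, hS347⟩
    rw [hS347]
    exact B_3457
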